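/- Let k ≥ 2 be an integer, n := 2^k, and for j ∈ ℤ set z_j := e^{i t_j} with t_j := 2πj/n. Then for every even integer j (j = 2u with u ∈ ℤ), the Rudin–Shapiro polynomials satisfy P_k(z_j) = 2·P_{k−2}(z_j). -/

import Mathlib

open Polynomial

/-- The Rudin–Shapiro polynomial pair `(P_k, Q_k)`, defined recursively by
`P_0 = Q_0 = 1`, `P_{k+1} = P_k + X^{2^k} Q_k`, `Q_{k+1} = P_k - X^{2^k} Q_k`. -/
noncomputable def RS : ℕ → Polynomial ℂ × Polynomial ℂ
  | 0 => (1, 1)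
  | k + 1 => ((RS k).1 + X ^ (2 ^ k) * (RS k).2, (RS k).1 - X ^ (2 ^ k) * (RS k).2)

theorem rudin_shapiro_P_at_even_roots_of_unity (k : ℕ) (hk : 2 ≤ k) (j : ℤ) (hj : Even j)
    (z : ℂ) (hz : z = Complex.exp (Complex.I * (2 * Real.pi * j / (2 : ℝ) ^ k))) :
    ((RS k).1).eval z = 2 * ((RS (k - 2)).1).eval z := by
  obtain ⟨m, rfl⟩ : ∃ m, k = m + 2 := ⟨k - 2, by omega⟩
  obtain ⟨u, rfl⟩ : ∃ u : ℤ, j = 2 * u := by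
    obtain ⟨u, hu⟩ := hj; exact ⟨u, by omega⟩
  have h1 : z ^ (2 ^ (m + 1)) = 1 := by
    rw [hz, ← Complex.exp_nat_mul]
    have : ((2 ^ (m + 1) : ℕ) : ℂ) * (Complex.I * (2 * Real.pi * (2 * u : ℤ) / (2 : ℝ) ^ (m + 2)))
        = (u : ℂ) * (2 * Real.pi * Complex.I) := by
      have h2 : ((2 : ℝ) ^ (m + 2) : ℂ) ≠ 0 := by
        push_cast; exact pow_ne_zero _ two_ne_zero
      field_simp
      push_cast; ring
    rw [this, Complex.exp_int_mul_two_pi_mul_I]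
  simp only [show m + 2 - 2 = m from rfl, RS, eval_add, eval_sub, eval_mul, eval_pow, eval_X,
    pow_succ]
  rw [show 2 ^ m * 2 = 2 ^ (m + 1) from (pow_succ 2 m).symm, h1]
  ring
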